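/- Let f ∈ Z[x^{±1}, y_1^{±1}, …, y_n^{±1}] be invariant under x ↦ x^{-1} and under the hyperoctahedral group acting on y_1,…,y_n (permutations and inversions). Write f = f_0 + x·f_1 with f_0, f_1 ∈ Z[u, v_1,…,v_n]^{S_n}, where u = x + x^{-1}, v_j = y_j + y_j^{-1} (this decomposition exists and is unique since x² − ux + 1 = 0). If x·∂f/∂x + y_j·∂f/∂y_j ∈ (y_j − x) for all j, then f_1 vanishes under each substitution y_j = x, i.e., f_1 is divisible by ∏_j (u − v_j) in Z[u, v_1, …, v_n]^{S_n}. -/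

import Mathlib

namespace Stmt10

variable (n : ℕ)

/-- the Laurent polynomial ring `ℤ[x^{±1}, y₁^{±1}, …, y_n^{±1}]`. -/
abbrev A (n : ℕ) := AddMonoidAlgebra ℤ (ℤ × (Fin n → ℤ))

noncomputable def X : A n := AddMonoidAlgebra.single (1, 0) 1
noncomputable def Y (j : Fin n) : A n := AddMonoidAlgebra.single (0, Pi.single j 1) 1
noncomputable def u : A n :=
  AddMonoidAlgebra.single (1, 0) 1 + AddMonoidAlgebra.single (-1, 0) 1
noncomputable def v (j : Fin n) : A n :=
  AddMonoidAlgebra.single (0, Pi.single j 1) 1 + AddMonoidAlgebra.single (0, -Pi.single j 1) 1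

/-- permutation of the `y` variables on exponents. -/
def permE (σ : Equiv.Perm (Fin n)) : (ℤ × (Fin n → ℤ)) ≃ (ℤ × (Fin n → ℤ)) :=
  Equiv.prodCongr (Equiv.refl ℤ) (Equiv.arrowCongr σ (Equiv.refl ℤ))

/-- inversion `y_j ↦ y_j⁻¹` on exponents. -/
def flipE (j : Fin n) : (ℤ × (Fin n → ℤ)) ≃ (ℤ × (Fin n → ℤ)) :=
  Function.Involutive.toPerm (fun m => (m.1, Function.update m.2 j (-(m.2 j))))
    (by
      intro m
      refine Prod.ext rfl ?_
      funext i
      by_cases h : i = j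
      · subst h; simp
      · simp [Function.update_of_ne h])

/-- inversion `x ↦ x⁻¹` on exponents. -/
def flipX : (ℤ × (Fin n → ℤ)) ≃ (ℤ × (Fin n → ℤ)) :=
  Function.Involutive.toPerm (fun m => (-m.1, m.2)) (by intro m; simp)

/-- the Euler operator `x∂/∂x + y_j∂/∂y_j`. -/
noncomputable def D (j : Fin n) (f : A n) : A n :=
  Finsupp.sum (AddMonoidAlgebra.coeff f) fun m c => AddMonoidAlgebra.single m ((m.1 + m.2 j) * c)

/-- symmetry of a polynomial in `u, v₁, …, v_n` under permutations of the `v`'s. -/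
def IsSym (p : MvPolynomial (Option (Fin n)) ℤ) : Prop :=
  ∀ σ : Equiv.Perm (Fin n), MvPolynomial.rename (Option.map σ) p = p

/-- evaluation `ℤ[u,v₁,…,v_n] → ℤ[x^{±1},y^{±1}]`. -/
noncomputable def ev : MvPolynomial (Option (Fin n)) ℤ →ₐ[ℤ] A n :=
  MvPolynomial.aeval (fun o : Option (Fin n) => o.elim (u n) (v n))

section Aux
variable {n}

/-- diagonal operator with weight `w`. -/
noncomputable def diag (w : ℤ × (Fin n → ℤ) → ℤ) (f : A n) : A n :=
  Finsupp.sum (AddMonoidAlgebra.coeff f) fun m c => AddMonoidAlgebra.single m (w m * c)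

lemma coeff_add (f g : A n) (m : ℤ × (Fin n → ℤ)) : (f + g).coeff m = f.coeff m + g.coeff m := rfl

lemma diag_apply (w : ℤ × (Fin n → ℤ) → ℤ) (f : A n) (m : ℤ × (Fin n → ℤ)) :
    (diag w f).coeff m = w m * f.coeff m := by
  classical
  rw [diag, Finsupp.sum, AddMonoidAlgebra.coeff_sum, Finset.sum_apply']
  by_cases h : m ∈ f.coeff.support
  · rw [Finset.sum_eq_single_of_mem m h]
    · rw [AddMonoidAlgebra.coeff_single, Finsupp.single_apply, if_pos rfl]
    · intro b _ hb
      rw [AddMonoidAlgebra.coeff_single, Finsupp.single_apply, if_neg hb]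
  · rw [Finset.sum_eq_zero, Finsupp.notMem_support_iff.mp h, mul_zero]
    intro b hb
    rw [AddMonoidAlgebra.coeff_single, Finsupp.single_apply, if_neg]
    rintro rfl
    exact h hb

lemma D_eq_diag (j : Fin n) (f : A n) : D n j f = diag (fun m => m.1 + m.2 j) f := rfl

lemma diag_single (w : ℤ × (Fin n → ℤ) → ℤ) (m : ℤ × (Fin n → ℤ)) (c : ℤ) :
    diag w (AddMonoidAlgebra.single m c) = AddMonoidAlgebra.single m (w m * c) := by
  rw [diag, AddMonoidAlgebra.coeff_single]
  exact Finsupp.sum_single_index (by rw [mul_zero]; exact AddMonoidAlgebra.single_zero m)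

lemma diag_add (w : ℤ × (Fin n → ℤ) → ℤ) (f g : A n) :
    diag w (f + g) = diag w f + diag w g := by
  ext m
  simp only [diag_apply, coeff_add, mul_add]

/-- projection `y_j ↦ x` on exponents -/
def proj (j : Fin n) : (ℤ × (Fin n → ℤ)) →+ (ℤ × (Fin n → ℤ)) where
  toFun m := (m.1 + m.2 j, Function.update m.2 j 0)
  map_zero' := by
    refine Prod.ext (by simp) ?_
    funext i
    by_cases h : i = j
    · subst h; simp
    · simp [Function.update_of_ne h]
  map_add' a b := by
    refine Prod.ext (by simp [Prod.fst_add]; ring) ?_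
    show Function.update (a.2 + b.2) j 0 = Function.update a.2 j 0 + Function.update b.2 j 0
    funext i
    by_cases h : i = j
    · subst h; simp
    · simp [Function.update_of_ne h]

lemma proj_mk (j : Fin n) (a : ℤ) (b : Fin n → ℤ) :
    proj j (a, b) = (a + b j, Function.update b j 0) := rfl

noncomputable def ψ (j : Fin n) : A n →+* A n := AddMonoidAlgebra.mapDomainRingHom ℤ (proj j)

lemma ψ_apply (j : Fin n) (f : A n) : ψ j f = AddMonoidAlgebra.mapDomain (proj j) f := rfl

lemma ψ_single (j : Fin n) (m : ℤ × (Fin n → ℤ)) (c : ℤ) :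
    ψ j (AddMonoidAlgebra.single m c) = AddMonoidAlgebra.single (proj j m) c := by
  rw [ψ_apply]; exact AddMonoidAlgebra.mapDomain_single

lemma ψ_D (j : Fin n) (f : A n) : ψ j (D n j f) = diag (fun m => m.1) (ψ j f) := by
  rw [D_eq_diag]
  induction f using AddMonoidAlgebra.induction with
  | zero => simp [diag, Finsupp.sum_zero_index]
  | single_add m c f hm hc ih =>
    rw [diag_add, map_add, map_add, diag_add, ih, diag_single, ψ_single, ψ_single, diag_single]
    rfl

lemma diag_fst_eq_zero {g : A n} (h : diag (fun m => m.1) g = 0)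
    {m : ℤ × (Fin n → ℤ)} (hm : m.1 ≠ 0) : g.coeff m = 0 := by
  have h2 : (0 : A n).coeff m = m.1 * g.coeff m := by rw [← h, diag_apply]
  have h3 : (0 : ℤ) = m.1 * g.coeff m := h2
  rcases mul_eq_zero.mp h3.symm with h4 | h4
  · exact absurd h4 hm
  · exact h4

/-- `x ↦ x⁻¹` on exponents, as an additive hom. -/
def negE : (ℤ × (Fin n → ℤ)) →+ (ℤ × (Fin n → ℤ)) where
  toFun m := (-m.1, m.2)
  map_zero' := by simp
  map_add' a b := by simp [Prod.ext_iff]; ring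

lemma negE_mk (a : ℤ) (b : Fin n → ℤ) : negE (a, b) = (-a, b) := rfl

noncomputable def N : A n →+* A n := AddMonoidAlgebra.mapDomainRingHom ℤ (negE (n := n))

lemma negE_inj : Function.Injective (negE (n := n)) := by
  intro a b h
  rw [Prod.ext_iff] at h ⊢
  obtain ⟨h1, h2⟩ := h
  exact ⟨neg_injective h1, h2⟩

lemma N_apply (f : A n) (m : ℤ × (Fin n → ℤ)) : (N f).coeff m = f.coeff (-m.1, m.2) := by
  have : (m : ℤ × (Fin n → ℤ)) = negE (-m.1, m.2) := by simp [negE, Prod.ext_iff]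
  calc (N f).coeff m = Finsupp.mapDomain (negE) f.coeff (negE (-m.1, m.2)) := by rw [← this]; rfl
  _ = f.coeff (-m.1, m.2) := Finsupp.mapDomain_apply negE_inj f.coeff _

open MvPolynomial in
noncomputable def sj (j : Fin n) :
    MvPolynomial (Option (Fin n)) ℤ →ₐ[ℤ] MvPolynomial (Option (Fin n)) ℤ :=
  aeval (fun o => if o = some j then MvPolynomial.X none else MvPolynomial.X o)

lemma update_single_self (j : Fin n) (c : ℤ) :
    Function.update (Pi.single j c) j 0 = (0 : Fin n → ℤ) := by
  funext i
  by_cases h : i = j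
  · subst h; simp
  · simp [Function.update_of_ne h, Pi.single_eq_of_ne h]

lemma update_single_other {j k : Fin n} (h : j ≠ k) (g : Fin n → ℤ) (hg : g j = 0) :
    Function.update g j 0 = g := by
  funext i
  by_cases hi : i = j
  · subst hi; simp [hg]
  · simp [Function.update_of_ne hi]

lemma update_zero (j : Fin n) : Function.update (0 : Fin n → ℤ) j 0 = 0 := by
  funext i
  by_cases h : i = j
  · subst h; simp
  · simp [Function.update_of_ne h]

lemma ψ_X (j : Fin n) : ψ j (X n) = X n := by
  rw [X, ψ_single, proj_mk]
  simp [update_zero]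

lemma ψ_Y (j : Fin n) : ψ j (Y n j) = X n := by
  rw [Y, ψ_single, X, proj_mk, update_single_self]
  simp

lemma ψ_u (j : Fin n) : ψ j (u n) = u n := by
  rw [u, map_add, ψ_single, ψ_single, proj_mk, proj_mk]
  simp [update_zero]

lemma neg_single (j : Fin n) : (-Pi.single j 1 : Fin n → ℤ) = Pi.single j (-1) := by
  funext i
  by_cases h : i = j
  · subst h; simp
  · simp [Pi.single_eq_of_ne h]

lemma ψ_v_self (j : Fin n) : ψ j (v n j) = u n := by
  rw [v, u, map_add, ψ_single, ψ_single, proj_mk, proj_mk, update_single_self, neg_single,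
    update_single_self]
  simp

lemma ψ_v_other {j k : Fin n} (h : k ≠ j) : ψ j (v n k) = v n k := by
  have hj : j ≠ k := Ne.symm h
  rw [v, map_add, ψ_single, ψ_single, proj_mk, proj_mk,
    update_single_other hj _ (Pi.single_eq_of_ne hj 1),
    update_single_other hj _ (by simp [Pi.single_eq_of_ne hj])]
  simp [Pi.single_eq_of_ne hj]

open MvPolynomial in
lemma ψ_ev (j : Fin n) (p : MvPolynomial (Option (Fin n)) ℤ) :
    ψ j (ev n p) = ev n (sj j p) := by
  have : ((ψ j).toIntAlgHom.comp (ev n)) = (ev n).comp (sj j) := by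
    apply MvPolynomial.algHom_ext
    intro o
    show ψ j (ev n (MvPolynomial.X o)) = ev n (sj j (MvPolynomial.X o))
    cases o with
    | none =>
      rw [show (ev n) (MvPolynomial.X none) = u n by simp [ev],
        show sj j (MvPolynomial.X none) = MvPolynomial.X none by simp [sj],
        show (ev n) (MvPolynomial.X none) = u n by simp [ev]]
      exact ψ_u j
    | some k =>
      by_cases hk : k = j
      · subst hk
        rw [show (ev n) (MvPolynomial.X (some k)) = v n k by simp [ev],
          show sj k (MvPolynomial.X (some k)) = MvPolynomial.X none by simp [sj],
          show (ev n) (MvPolynomial.X none) = u n by simp [ev]]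
        exact ψ_v_self k
      · rw [show (ev n) (MvPolynomial.X (some k)) = v n k by simp [ev],
          show sj j (MvPolynomial.X (some k)) = MvPolynomial.X (some k) by simp [sj, hk],
          show (ev n) (MvPolynomial.X (some k)) = v n k by simp [ev]]
        exact ψ_v_other hk
  exact DFunLike.congr_fun this p

lemma N_ev (p : MvPolynomial (Option (Fin n)) ℤ) : N (ev n p) = ev n p := by
  have : ((N (n := n)).toIntAlgHom.comp (ev n)) = (ev n) := by
    apply MvPolynomial.algHom_ext
    intro o
    show N (ev n (MvPolynomial.X o)) = ev n (MvPolynomial.X o)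
    cases o with
    | none =>
      rw [show (ev n) (MvPolynomial.X none) = u n by simp [ev]]
      rw [u, map_add]
      rw [show (N (AddMonoidAlgebra.single ((1 : ℤ), (0 : Fin n → ℤ)) 1) : A n)
          = AddMonoidAlgebra.mapDomain negE (AddMonoidAlgebra.single (1, 0) 1) from rfl,
        show (N (AddMonoidAlgebra.single ((-1 : ℤ), (0 : Fin n → ℤ)) 1) : A n)
          = AddMonoidAlgebra.mapDomain negE (AddMonoidAlgebra.single (-1, 0) 1) from rfl,
        AddMonoidAlgebra.mapDomain_single, AddMonoidAlgebra.mapDomain_single]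
      show AddMonoidAlgebra.single ((-1 : ℤ), (0 : Fin n → ℤ)) 1
          + AddMonoidAlgebra.single (1, 0) 1 = _
      rw [add_comm]
    | some k =>
      rw [show (ev n) (MvPolynomial.X (some k)) = v n k by simp [ev]]
      rw [v, map_add]
      rw [show (N (AddMonoidAlgebra.single ((0 : ℤ), (Pi.single k 1 : Fin n → ℤ)) 1) : A n)
          = AddMonoidAlgebra.mapDomain negE (AddMonoidAlgebra.single (0, Pi.single k 1) 1) from rfl,
        show (N (AddMonoidAlgebra.single ((0 : ℤ), (-Pi.single k 1 : Fin n → ℤ)) 1) : A n)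
          = AddMonoidAlgebra.mapDomain negE (AddMonoidAlgebra.single (0, -Pi.single k 1) 1) from rfl,
        AddMonoidAlgebra.mapDomain_single, AddMonoidAlgebra.mapDomain_single]
      rw [show negE ((0:ℤ), (Pi.single k 1 : Fin n → ℤ)) = (0, Pi.single k 1) from by
            simp [negE_mk],
        show negE ((0:ℤ), (-Pi.single k 1 : Fin n → ℤ)) = (0, -Pi.single k 1) from by
            simp [negE_mk]]
  exact DFunLike.congr_fun this p

lemma b_eq_zero (a b : A n)
    (ha : ∀ m : ℤ × (Fin n → ℤ), a.coeff (-m.1, m.2) = a.coeff m)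
    (hb : ∀ m : ℤ × (Fin n → ℤ), b.coeff (-m.1, m.2) = b.coeff m)
    (h : ∀ m : ℤ × (Fin n → ℤ), m.1 ≠ 0 → a.coeff m + b.coeff (m.1 - 1, m.2) = 0) : b = 0 := by
  ext m
  obtain ⟨t, m₂⟩ := m
  -- basic relation
  have hrel : ∀ t : ℤ, t ≠ 0 → b.coeff (t - 1, m₂) = b.coeff (-t - 1, m₂) := by
    intro t ht
    have h1 : a.coeff (t, m₂) + b.coeff (t - 1, m₂) = 0 := h (t, m₂) ht
    have h2 : a.coeff (-t, m₂) + b.coeff (-t - 1, m₂) = 0 := h (-t, m₂) (neg_ne_zero.mpr ht)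
    have h3 : a.coeff (-t, m₂) = a.coeff (t, m₂) := ha (t, m₂)
    linarith
  have step : ∀ s : ℤ, s ≠ -1 → b.coeff (s, m₂) = b.coeff (s + 2, m₂) := by
    intro s hs
    have h1 : b.coeff (s, m₂) = b.coeff (-s - 2, m₂) := by
      have := hrel (s + 1) (by omega)
      rw [show s + 1 - 1 = s by ring, show -(s+1) - 1 = -s - 2 by ring] at this
      exact this
    have h2 : b.coeff (-(s + 2), m₂) = b.coeff (s + 2, m₂) := hb (s + 2, m₂)
    rw [h1, show -s - 2 = -(s+2) by ring, h2]
  have chain : ∀ t : ℤ, 0 ≤ t → ∀ k : ℕ, b.coeff (t, m₂) = b.coeff (t + 2 * k, m₂) := by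
    intro t ht k
    induction k with
    | zero => simp
    | succ k ih =>
      rw [ih, step (t + 2 * k) (by omega)]
      congr 2
      push_cast
      ring
  have hnonneg : ∀ t : ℤ, 0 ≤ t → b.coeff (t, m₂) = 0 := by
    intro t ht
    by_contra hne
    have hmem : ∀ k : ℕ, ((t + 2 * (k : ℤ), m₂) : ℤ × (Fin n → ℤ)) ∈ (b.coeff.support : Set (ℤ × (Fin n → ℤ))) := by
      intro k
      simp only [Finset.coe_sort_coe, Finset.mem_coe, Finsupp.mem_support_iff]
      rw [← chain t ht k]
      exact hne
    have hinj : Function.Injective (fun k : ℕ => ((t + 2 * (k : ℤ), m₂) : ℤ × (Fin n → ℤ))) := by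
      intro k l hkl
      simp only [Prod.mk.injEq] at hkl
      omega
    exact (Set.infinite_of_injective_forall_mem hinj hmem) b.coeff.support.finite_toSet
  rcases le_or_gt 0 t with ht | ht
  · exact hnonneg t ht
  · have := hb (t, m₂)
    rw [← this]
    exact hnonneg (-t) (by omega)

lemma corner {M : Type*} [AddCommGroup M] [PartialOrder M] [IsOrderedAddMonoid M] {p q s t : M}
    (hp : p ≤ s) (hq : q ≤ t) (h : p + q = s + t) : p = s ∧ q = t := by
  have h1 : s - p = q - t := by
    rw [sub_eq_sub_iff_add_eq_add, ← h, add_comm]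
  have h2 : (0 : M) ≤ s - p := sub_nonneg.mpr hp
  have h3 : q - t ≤ 0 := sub_nonpos.mpr hq
  have h5 : s - p = 0 := le_antisymm (h1 ▸ h3) h2
  have hps : p = s := (sub_eq_zero.mp h5).symm
  refine ⟨hps, ?_⟩
  subst hps
  exact add_left_cancel h

/-- `g` has "top monomial" `s` with coefficient 1. -/
def IsTp (g : A n) (s : ℤ × (Fin n → ℤ)) : Prop :=
  g.coeff s = 1 ∧ ∀ m ∈ g.coeff.support, m ≤ s

lemma IsTp.mul {f g : A n} {s t : ℤ × (Fin n → ℤ)} (hf : IsTp f s) (hg : IsTp g t) :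
    IsTp (f * g) (s + t) := by
  classical
  constructor
  · rw [AddMonoidAlgebra.coeff_mul, Finsupp.sum,
      Finset.sum_eq_single_of_mem s (Finsupp.mem_support_iff.mpr (by rw [hf.1]; exact one_ne_zero))]
    · rw [Finsupp.sum,
        Finset.sum_eq_single_of_mem t
          (Finsupp.mem_support_iff.mpr (by rw [hg.1]; exact one_ne_zero))]
      · rw [if_pos rfl, hf.1, hg.1, one_mul]
      · intro a₂ ha₂ hne
        rw [if_neg]
        intro hadd
        exact hne ((corner le_rfl (hg.2 a₂ ha₂) hadd).2)
    · intro a₁ ha₁ hne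
      rw [Finsupp.sum, Finset.sum_eq_zero]
      intro a₂ ha₂
      rw [if_neg]
      intro hadd
      exact hne ((corner (hf.2 a₁ ha₁) (hg.2 a₂ ha₂) hadd).1)
  · intro m hm
    classical
    have hmem := AddMonoidAlgebra.support_coeff_mul_subset f g hm
    rw [Finset.mem_add] at hmem
    obtain ⟨p, hp, q, hq, rfl⟩ := hmem
    exact add_le_add (hf.2 p hp) (hg.2 q hq)

lemma IsTp.one : IsTp (1 : A n) 0 := by
  constructor
  · exact Finsupp.single_eq_same
  · intro m hm
    have := Finsupp.support_single_subset hm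
    rw [Finset.mem_singleton] at this
    exact this.le

lemma IsTp.pow {f : A n} {s : ℤ × (Fin n → ℤ)} (hf : IsTp f s) (k : ℕ) :
    IsTp (f ^ k) (k • s) := by
  induction k with
  | zero => simpa using IsTp.one
  | succ k ih =>
    rw [pow_succ, succ_nsmul]
    exact ih.mul hf

lemma top_u : IsTp (u n) (1, 0) := by
  constructor
  · rw [u, coeff_add, AddMonoidAlgebra.coeff_single, AddMonoidAlgebra.coeff_single,
        Finsupp.single_eq_same,
      Finsupp.single_eq_of_ne (by norm_num [Prod.ext_iff]), add_zero]
  · intro m hm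
    have := Finsupp.support_add hm
    rw [Finset.mem_union] at this
    rcases this with h | h <;> have := Finsupp.support_single_subset h <;>
      rw [Finset.mem_singleton] at this <;> subst this
    · exact le_rfl
    · exact Prod.mk_le_mk.mpr ⟨by norm_num, le_rfl⟩

lemma top_v (k : Fin n) : IsTp (v n k) (0, Pi.single k 1) := by
  constructor
  · rw [v, coeff_add, AddMonoidAlgebra.coeff_single, AddMonoidAlgebra.coeff_single,
        Finsupp.single_eq_same,
      Finsupp.single_eq_of_ne, add_zero]
    intro hcon
    have := congrFun (congrArg Prod.snd hcon) k
    simp at this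
  · intro m hm
    have := Finsupp.support_add hm
    rw [Finset.mem_union] at this
    rcases this with h | h <;> have := Finsupp.support_single_subset h <;>
      rw [Finset.mem_singleton] at this <;> subst this
    · exact le_rfl
    · refine Prod.mk_le_mk.mpr ⟨le_rfl, ?_⟩
      rw [neg_single]
      intro i
      by_cases h : i = k
      · subst h; simp
      · simp [Pi.single_eq_of_ne h]

lemma IsTp.prod {ι : Type*} (s : Finset ι) (f : ι → A n) (t : ι → ℤ × (Fin n → ℤ))
    (h : ∀ i ∈ s, IsTp (f i) (t i)) : IsTp (∏ i ∈ s, f i) (∑ i ∈ s, t i) := by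
  classical
  induction s using Finset.induction_on with
  | empty => simpa using IsTp.one
  | insert i s' hns ih =>
    rw [Finset.prod_insert hns, Finset.sum_insert hns]
    exact (h i (Finset.mem_insert_self i s')).mul
      (ih fun j hj => h j (Finset.mem_insert_of_mem hj))

def topO : Option (Fin n) → ℤ × (Fin n → ℤ) :=
  fun o => o.elim ((1 : ℤ), (0 : Fin n → ℤ)) (fun k => (0, Pi.single k 1))

def topM (e : Option (Fin n) →₀ ℕ) : ℤ × (Fin n → ℤ) :=
  ((e none : ℤ), fun k => (e (some k) : ℤ))

lemma top_gen (o : Option (Fin n)) : IsTp (Option.elim o (u n) (v n)) (topO o) := by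
  cases o with
  | none => exact top_u
  | some k => exact top_v k

lemma sum_topO (e : Option (Fin n) →₀ ℕ) :
    ∑ o ∈ e.support, e o • topO o = topM e := by
  refine Prod.ext ?_ ?_
  · rw [Prod.fst_sum]
    rw [Finset.sum_congr rfl (fun o _ => show (e o • topO o).1 = if o = none then ((e o : ℤ)) else 0 by
      cases o with
      | none => simp [topO]
      | some k => simp [topO])]
    rw [Finset.sum_ite_eq' e.support none (fun o => ((e o : ℤ)))]
    show _ = ((e none : ℤ))
    by_cases h : none ∈ e.support
    · rw [if_pos h]
    · rw [if_neg h, Finsupp.notMem_support_iff.mp h]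
      simp
  · rw [Prod.snd_sum]
    funext i
    rw [Finset.sum_apply]
    show _ = ((e (some i) : ℤ))
    rw [Finset.sum_congr rfl (fun o _ =>
      show (e o • topO o).2 i = if o = some i then ((e o : ℤ)) else 0 by
      cases o with
      | none => simp [topO]
      | some k =>
        by_cases hk : k = i
        · subst hk; simp [topO]
        · simp [topO, hk, Pi.single_eq_of_ne (Ne.symm hk)])]
    rw [Finset.sum_ite_eq' e.support (some i) (fun o => ((e o : ℤ)))]
    by_cases h : some i ∈ e.support
    · rw [if_pos h]
    · rw [if_neg h, Finsupp.notMem_support_iff.mp h]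
      simp

lemma top_monomial (e : Option (Fin n) →₀ ℕ) :
    IsTp (ev n (MvPolynomial.monomial e 1)) (topM e) := by
  rw [show (ev n) (MvPolynomial.monomial e 1)
      = ∏ o ∈ e.support, (Option.elim o (u n) (v n)) ^ e o by
    rw [ev, MvPolynomial.aeval_monomial, map_one, one_mul, Finsupp.prod]]
  rw [← sum_topO]
  exact IsTp.prod e.support _ _ fun o _ => (top_gen o).pow (e o)

lemma topM_le {e e' : Option (Fin n) →₀ ℕ} (h : topM e ≤ topM e') : e ≤ e' := by
  rw [Finsupp.le_def]
  obtain ⟨h1, h2⟩ := Prod.le_def.mp h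
  simp only [topM] at h1 h2
  intro o
  cases o with
  | none => exact_mod_cast h1
  | some k =>
    have := h2 k
    simp only at this
    exact_mod_cast this

lemma ev_eq_zero {p : MvPolynomial (Option (Fin n)) ℤ} (h : ev n p = 0) : p = 0 := by
  by_contra hp
  have hsupp : p.support.Nonempty := by
    rwa [Finset.nonempty_iff_ne_empty, Ne, MvPolynomial.support_eq_empty]
  obtain ⟨e, he, hmax⟩ := p.support.exists_maximal hsupp
  have hmono : ∀ (v' : Option (Fin n) →₀ ℕ),
      MvPolynomial.monomial v' (MvPolynomial.coeff v' p)
        = (MvPolynomial.coeff v' p) • MvPolynomial.monomial v' (1:ℤ) := fun v' => by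
    rw [MvPolynomial.smul_monomial, smul_eq_mul, mul_one]
  have hcoeff : (ev n p).coeff (topM e) = MvPolynomial.coeff e p := by
    conv_lhs => rw [MvPolynomial.as_sum p]
    rw [map_sum, AddMonoidAlgebra.coeff_sum, Finset.sum_apply', Finset.sum_eq_single_of_mem e he]
    · rw [hmono, map_smul, AddMonoidAlgebra.coeff_smul_apply, (top_monomial e).1, smul_eq_mul, mul_one]
    · intro v' hv' hne
      have hz : (ev n (MvPolynomial.monomial v' (1:ℤ))).coeff (topM e) = 0 := by
        by_contra hz
        have hmem : topM e ∈ (ev n (MvPolynomial.monomial v' (1:ℤ))).coeff.support :=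
          Finsupp.mem_support_iff.mpr hz
        have hle := topM_le ((top_monomial v').2 _ hmem)
        exact hne (le_antisymm (hmax hv' hle) hle)
      rw [hmono, map_smul, AddMonoidAlgebra.coeff_smul_apply, hz, smul_zero]
  rw [h] at hcoeff
  exact (MvPolynomial.mem_support_iff.mp he) hcoeff.symm

open MvPolynomial in
noncomputable def rj (j : Fin n) :
    MvPolynomial (Option (Fin n)) ℤ →ₐ[ℤ] MvPolynomial (Fin n) ℤ :=
  aeval (fun o => Option.elim o (MvPolynomial.X j) MvPolynomial.X)

open MvPolynomial in
lemma dvd_iff_rj (j : Fin n) (p : MvPolynomial (Option (Fin n)) ℤ) :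
    (MvPolynomial.X none - MvPolynomial.X (some j) : MvPolynomial (Option (Fin n)) ℤ) ∣ p
      ↔ rj j p = 0 := by
  set E : MvPolynomial (Option (Fin n)) ℤ ≃ₐ[ℤ] Polynomial (MvPolynomial (Fin n) ℤ) :=
    (renameEquiv ℤ (Equiv.swap (none : Option (Fin n)) (some j))).trans
      (optionEquivLeft ℤ (Fin n)) with hE
  have hnone : E (MvPolynomial.X (none : Option (Fin n))) = Polynomial.C (MvPolynomial.X j) := by
    rw [hE]
    simp [renameEquiv_apply, rename_X, Equiv.swap_apply_left, optionEquivLeft_X_some]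
  have hsome : E (MvPolynomial.X (some j)) = Polynomial.X := by
    rw [hE]
    simp [renameEquiv_apply, rename_X, Equiv.swap_apply_right, optionEquivLeft_X_none]
  have key : ∀ q : MvPolynomial (Option (Fin n)) ℤ,
      Polynomial.eval (MvPolynomial.X j) (E q) = rj j q := by
    have hcomp : (((Polynomial.aeval (MvPolynomial.X j : MvPolynomial (Fin n) ℤ)).restrictScalars
        ℤ).comp E.toAlgHom) = rj j := by
      apply MvPolynomial.algHom_ext
      intro o
      simp only [AlgHom.coe_comp, Function.comp_apply, AlgHom.coe_restrictScalars',
        AlgEquiv.toAlgHom_eq_coe, AlgHom.coe_coe, AlgEquiv.toAlgHom_apply]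
      cases o with
      | none =>
        rw [hnone, Polynomial.aeval_C]
        simp [rj]
      | some k =>
        by_cases hk : k = j
        · subst hk
          rw [hsome, Polynomial.aeval_X]
          simp [rj]
        · rw [hE]
          simp only [AlgEquiv.trans_apply, renameEquiv_apply, rename_X]
          rw [Equiv.swap_apply_of_ne_of_ne (by simp) (by simp [hk]),
            optionEquivLeft_X_some, Polynomial.aeval_C]
          simp [rj]
    intro q
    have := DFunLike.congr_fun hcomp q
    simpa [Polynomial.coe_aeval_eq_eval] using this
  constructor
  · rintro ⟨c, rfl⟩
    rw [map_mul]
    have : rj j (MvPolynomial.X none - MvPolynomial.X (some j)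
        : MvPolynomial (Option (Fin n)) ℤ) = 0 := by
      simp [rj]
    rw [this, zero_mul]
  · intro h0
    have hroot : Polynomial.IsRoot (E p) (MvPolynomial.X j) := by
      rw [Polynomial.IsRoot, key, h0]
    obtain ⟨c, hc⟩ := (Polynomial.dvd_iff_isRoot).mpr hroot
    refine ⟨-(E.symm c), ?_⟩
    apply E.injective
    rw [map_mul, map_sub, hnone, hsome, map_neg, AlgEquiv.apply_symm_apply, hc]
    ring

open MvPolynomial in
lemma rj_ne_zero {i j : Fin n} (h : i ≠ j) :
    (MvPolynomial.X j - MvPolynomial.X i : MvPolynomial (Fin n) ℤ) ≠ 0 := by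
  intro h0
  have := congrArg (MvPolynomial.aeval (fun k : Fin n => if k = j then (1:ℤ) else 0)) h0
  rw [map_sub, MvPolynomial.aeval_X, MvPolynomial.aeval_X, map_zero, if_pos rfl, if_neg h] at this
  norm_num at this

open MvPolynomial in
lemma prime_d (j : Fin n) :
    Prime (MvPolynomial.X none - MvPolynomial.X (some j)
      : MvPolynomial (Option (Fin n)) ℤ) := by
  refine ⟨?_, ?_, ?_⟩
  · intro h0
    have := congrArg
      (MvPolynomial.aeval (fun o : Option (Fin n) => Option.elim o (1:ℤ) (fun _ => 0))) h0
    simp at this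
  · intro hu
    have := hu.map (MvPolynomial.aeval (fun _ : Option (Fin n) => (0:ℤ)))
    simp at this
  · intro a b hab
    rw [dvd_iff_rj] at hab
    rw [dvd_iff_rj, dvd_iff_rj]
    rw [map_mul] at hab
    exact mul_eq_zero.mp hab

open MvPolynomial in
lemma prod_dvd (s : Finset (Fin n)) (p : MvPolynomial (Option (Fin n)) ℤ)
    (h : ∀ j ∈ s, (MvPolynomial.X none - MvPolynomial.X (some j)
      : MvPolynomial (Option (Fin n)) ℤ) ∣ p) :
    (∏ j ∈ s, (MvPolynomial.X none - MvPolynomial.X (some j)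
      : MvPolynomial (Option (Fin n)) ℤ)) ∣ p := by
  classical
  induction s using Finset.induction_on generalizing p with
  | empty => simp
  | insert i s' hns ih =>
    obtain ⟨m, rfl⟩ := h i (Finset.mem_insert_self i s')
    rw [Finset.prod_insert hns]
    refine mul_dvd_mul_left _ (ih m fun j hj => ?_)
    have hij : j ≠ i := fun hji => hns (hji ▸ hj)
    have hdvd := h j (Finset.mem_insert_of_mem hj)
    rcases (prime_d j).2.2 _ _ hdvd with hcase | hcase
    · exfalso
      rw [dvd_iff_rj] at hcase
      rw [show rj j (MvPolynomial.X none - MvPolynomial.X (some i)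
          : MvPolynomial (Option (Fin n)) ℤ)
          = MvPolynomial.X j - MvPolynomial.X i by simp [rj]] at hcase
      exact rj_ne_zero (Ne.symm hij) hcase
    · exact hcase

end Aux

/-- for `f` invariant under `x ↦ x⁻¹` and the hyperoctahedral group
acting on the `y`'s, written (uniquely) as `f = f₀ + x·f₁` with
`f₀, f₁ ∈ ℤ[u,v₁,…,v_n]^{S_n}`: if `x∂f/∂x + y_j∂f/∂y_j ∈ (y_j − x)` for all `j`,
then `f₁` is divisible by `∏_j (u − v_j)` inside `ℤ[u,v₁,…,v_n]^{S_n}`. -/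
theorem statement10
    (f : A n) (p₀ p₁ : MvPolynomial (Option (Fin n)) ℤ)
    (hinvperm : ∀ σ : Equiv.Perm (Fin n), Finsupp.equivMapDomain (permE n σ) (AddMonoidAlgebra.coeff f) = AddMonoidAlgebra.coeff f)
    (hinvflip : ∀ j : Fin n, Finsupp.equivMapDomain (flipE n j) (AddMonoidAlgebra.coeff f) = AddMonoidAlgebra.coeff f)
    (hinvx : Finsupp.equivMapDomain (flipX n) (AddMonoidAlgebra.coeff f) = AddMonoidAlgebra.coeff f)
    (hsym₀ : IsSym n p₀) (hsym₁ : IsSym n p₁)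
    (hdec : f = ev n p₀ + X n * ev n p₁)
    (hD : ∀ j : Fin n, D n j f ∈ Ideal.span {Y n j - X n}) :
    ∃ q : MvPolynomial (Option (Fin n)) ℤ, IsSym n q ∧
      p₁ = (∏ j : Fin n, (MvPolynomial.X none - MvPolynomial.X (some j))) * q := by
  classical
  have hdvd : ∀ j : Fin n, (MvPolynomial.X none - MvPolynomial.X (some j)
      : MvPolynomial (Option (Fin n)) ℤ) ∣ p₁ := by
    intro j
    have h1 : ψ j (D n j f) = 0 := by
      obtain ⟨c, hc⟩ := Ideal.mem_span_singleton.mp (hD j)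
      rw [hc, map_mul]
      have hz : ψ j (Y n j - X n) = 0 := by rw [map_sub, ψ_Y, ψ_X, sub_self]
      rw [hz, zero_mul]
    have h3 : diag (fun m => m.1) (ψ j f) = 0 := by rw [← ψ_D, h1]
    have h2 : ψ j f = ev n (sj j p₀) + X n * ev n (sj j p₁) := by
      rw [hdec, map_add, map_mul, ψ_X, ψ_ev, ψ_ev]
    have hb : ev n (sj j p₁) = 0 := by
      apply b_eq_zero (ev n (sj j p₀)) (ev n (sj j p₁))
      · intro m
        rw [← N_apply, N_ev]
      · intro m
        rw [← N_apply, N_ev]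
      · intro m hm
        have h4 : (ψ j f).coeff m = 0 := diag_fst_eq_zero h3 hm
        have h5 : (X n * ev n (sj j p₁)).coeff m = (ev n (sj j p₁)).coeff (m.1 - 1, m.2) := by
          rw [X, AddMonoidAlgebra.coeff_single_mul_apply, one_mul]
          congr 1
          refine Prod.ext ?_ ?_
          · show (-((1 : ℤ), (0 : Fin n → ℤ)) + m).1 = m.1 - 1
            simp [sub_eq_neg_add]
          · show (-((1 : ℤ), (0 : Fin n → ℤ)) + m).2 = m.2
            simp
        rw [h2, coeff_add, h5] at h4
        exact h4
    have hsj : sj j p₁ = 0 := ev_eq_zero hb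
    rw [dvd_iff_rj]
    have hcomp : (rj j).comp (sj j) = rj j := by
      apply MvPolynomial.algHom_ext
      intro o
      cases o with
      | none => simp [rj, sj]
      | some k =>
        by_cases hk : k = j
        · subst hk; simp [rj, sj]
        · simp [rj, sj, hk]
    calc rj j p₁ = (rj j) (sj j p₁) := (DFunLike.congr_fun hcomp p₁).symm
    _ = 0 := by rw [hsj, map_zero]
  obtain ⟨q, hq⟩ := prod_dvd Finset.univ p₁ (fun j _ => hdvd j)
  have hP0 : (∏ j : Fin n, (MvPolynomial.X none - MvPolynomial.X (some j))
      : MvPolynomial (Option (Fin n)) ℤ) ≠ 0 :=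
    Finset.prod_ne_zero_iff.mpr fun j _ => (prime_d j).ne_zero
  refine ⟨q, ?_, hq⟩
  intro σ
  have hren : MvPolynomial.rename (Option.map ⇑σ)
      ((∏ j : Fin n, (MvPolynomial.X none - MvPolynomial.X (some j)))
        : MvPolynomial (Option (Fin n)) ℤ)
      = ∏ j : Fin n, (MvPolynomial.X none - MvPolynomial.X (some j)) := by
    rw [map_prod]
    have hterm : ∀ j : Fin n, MvPolynomial.rename (Option.map ⇑σ)
        (MvPolynomial.X none - MvPolynomial.X (some j) : MvPolynomial (Option (Fin n)) ℤ)
        = MvPolynomial.X none - MvPolynomial.X (some (σ j)) := fun j => by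
      rw [map_sub, MvPolynomial.rename_X, MvPolynomial.rename_X]
      rfl
    rw [Finset.prod_congr rfl (fun j _ => hterm j)]
    exact Equiv.prod_comp σ (fun j => MvPolynomial.X none - MvPolynomial.X (some j))
  have hs := hsym₁ σ
  rw [hq, map_mul, hren] at hs
  exact mul_left_cancel₀ hP0 hs

end Stmt10
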